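/- Let L be an even hyperbolic lattice with positive cone P_L and let a = [h₀, ρ₁, …, ρ_K] be an ample list of vectors of L. Then for every v ∈ P_L ∩ L there exists an element g of the Weyl group W(L) (the subgroup of the isometry group of L generated by the reflections s_r : x ↦ x + ⟨x,r⟩·r in (−2)-vectors r) such that the image w = v^g satisfies ⟨w,w⟩ = ⟨v,v⟩, w ∈ P_L, S(h₀, w) = ∅, and ⟨w, r⟩ ≥ 0 for every r ∈ R⁺(a); that is, every Weyl group orbit of a vector of positive square-norm in P_L ∩ L contains a vector lying in the standard fundamental domain D(a). -/
import Mathlib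


open Matrix

/-- The intersection form of the lattice `ℤ^n` with Gram matrix `G`. -/
def latticePairing {n : ℕ} (G : Matrix (Fin n) (Fin n) ℤ) (x y : Fin n → ℤ) : ℤ :=
  x ⬝ᵥ G.mulVec y

/-- `G` is the Gram matrix of an even hyperbolic lattice: the rank is `> 1`, the form is
symmetric, `⟨v,v⟩` is even for all `v`, and the real quadratic space has signature
`(1, n-1)`, expressed by a diagonalization over `ℝ` with diagonal `(1, -1, …, -1)`. -/
def IsEvenHyperbolic {n : ℕ} (G : Matrix (Fin n) (Fin n) ℤ) : Prop :=
  1 < n ∧ G.IsSymm ∧ (∀ v : Fin n → ℤ, Even (latticePairing G v v)) ∧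
    ∃ P : Matrix (Fin n) (Fin n) ℝ, IsUnit P.det ∧
      Pᵀ * (G.map (Int.cast : ℤ → ℝ)) * P =
        Matrix.diagonal (fun i : Fin n => if (i : ℕ) = 0 then (1 : ℝ) else -1)

/-- A finite vector is lexicographically positive if it is nonzero and its leftmost
nonzero entry is positive. -/
def LexPos {m : ℕ} (t : Fin m → ℤ) : Prop :=
  ∃ j, 0 < t j ∧ ∀ i, i < j → t i = 0

/-- The vector `(⟨h₀,x⟩, ⟨ρ₁,x⟩, …, ⟨ρ_K,x⟩)` of pairings against the members of an
ample list. -/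
def pairingVector {n K : ℕ} (G : Matrix (Fin n) (Fin n) ℤ) (h₀ : Fin n → ℤ)
    (ρ : Fin K → Fin n → ℤ) (x : Fin n → ℤ) : Fin (K + 1) → ℤ :=
  Fin.cons (latticePairing G h₀ x) (fun i => latticePairing G (ρ i) x)

/-- The reflection `s_r : x ↦ x + ⟨x,r⟩ r` in a `(-2)`-vector `r`. -/
def reflect {n : ℕ} (G : Matrix (Fin n) (Fin n) ℤ) (x r : Fin n → ℤ) : Fin n → ℤ :=
  x + latticePairing G x r • r

namespace AuxWeyl

variable {n : ℕ}

lemma lp_add_right (G : Matrix (Fin n) (Fin n) ℤ) (x y z : Fin n → ℤ) :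
    latticePairing G x (y + z) = latticePairing G x y + latticePairing G x z := by
  simp [latticePairing, Matrix.mulVec_add]

lemma lp_smul_right (G : Matrix (Fin n) (Fin n) ℤ) (c : ℤ) (x y : Fin n → ℤ) :
    latticePairing G x (c • y) = c * latticePairing G x y := by
  show x ⬝ᵥ G *ᵥ (c • y) = _
  rw [Matrix.mulVec_smul, dotProduct_smul, smul_eq_mul]; rfl

lemma lp_add_left (G : Matrix (Fin n) (Fin n) ℤ) (x y z : Fin n → ℤ) :
    latticePairing G (x + y) z = latticePairing G x z + latticePairing G y z := by
  simp [latticePairing, add_dotProduct]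

lemma lp_smul_left (G : Matrix (Fin n) (Fin n) ℤ) (c : ℤ) (x y : Fin n → ℤ) :
    latticePairing G (c • x) y = c * latticePairing G x y := by
  show (c • x) ⬝ᵥ _ = _
  rw [smul_dotProduct, smul_eq_mul]; rfl

lemma lp_symm (G : Matrix (Fin n) (Fin n) ℤ) (hs : G.IsSymm) (x y : Fin n → ℤ) :
    latticePairing G x y = latticePairing G y x := by
  simp only [latticePairing, dotProduct, Matrix.mulVec, Finset.mul_sum, Finset.sum_mul]
  rw [Finset.sum_comm]
  refine Finset.sum_congr rfl fun i _ => Finset.sum_congr rfl fun j _ => ?_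
  have : G j i = G i j := by
    conv_lhs => rw [← hs]
    rfl
  rw [this]; ring

lemma lp_reflect_left (G : Matrix (Fin n) (Fin n) ℤ) (w r z : Fin n → ℤ) :
    latticePairing G (reflect G w r) z =
      latticePairing G w z + latticePairing G w r * latticePairing G r z := by
  show latticePairing G (w + latticePairing G w r • r) z = _
  rw [lp_add_left, lp_smul_left]

lemma lp_reflect_norm (G : Matrix (Fin n) (Fin n) ℤ) (hs : G.IsSymm) (w r : Fin n → ℤ)
    (hr : latticePairing G r r = -2) :
    latticePairing G (reflect G w r) (reflect G w r) = latticePairing G w w := by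
  simp only [reflect, lp_add_left, lp_add_right, lp_smul_left, lp_smul_right]
  rw [lp_symm G hs r w, hr]; ring

def Bf (G : Matrix (Fin n) (Fin n) ℤ) (x y : Fin n → ℝ) : ℝ :=
  x ⬝ᵥ (G.map (Int.cast : ℤ → ℝ)).mulVec y

def castVec (x : Fin n → ℤ) : Fin n → ℝ := fun i => (x i : ℝ)

lemma lp_cast (G : Matrix (Fin n) (Fin n) ℤ) (x y : Fin n → ℤ) :
    ((latticePairing G x y : ℤ) : ℝ) = Bf G (castVec x) (castVec y) := by
  simp only [latticePairing, Bf, castVec, dotProduct, Matrix.mulVec, Matrix.map_apply]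
  push_cast
  rfl

lemma Bf_add_left (G : Matrix (Fin n) (Fin n) ℤ) (x y z : Fin n → ℝ) :
    Bf G (x + y) z = Bf G x z + Bf G y z := by
  simp [Bf, add_dotProduct]

lemma Bf_smul_left (G : Matrix (Fin n) (Fin n) ℤ) (c : ℝ) (x y : Fin n → ℝ) :
    Bf G (c • x) y = c * Bf G x y := by
  show (c • x) ⬝ᵥ _ = _
  rw [smul_dotProduct, smul_eq_mul]; rfl

lemma Bf_add_right (G : Matrix (Fin n) (Fin n) ℤ) (x y z : Fin n → ℝ) :
    Bf G x (y + z) = Bf G x y + Bf G x z := by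
  simp [Bf, Matrix.mulVec_add]

lemma Bf_smul_right (G : Matrix (Fin n) (Fin n) ℤ) (c : ℝ) (x y : Fin n → ℝ) :
    Bf G x (c • y) = c * Bf G x y := by
  show x ⬝ᵥ _ *ᵥ (c • y) = _
  rw [Matrix.mulVec_smul, dotProduct_smul, smul_eq_mul]; rfl

lemma Bf_symm (G : Matrix (Fin n) (Fin n) ℤ) (hs : G.IsSymm) (x y : Fin n → ℝ) :
    Bf G x y = Bf G y x := by
  simp only [Bf, dotProduct, Matrix.mulVec, Matrix.map_apply, Finset.mul_sum, Finset.sum_mul]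
  rw [Finset.sum_comm]
  refine Finset.sum_congr rfl fun i _ => Finset.sum_congr rfl fun j _ => ?_
  have : G j i = G i j := by
    conv_lhs => rw [← hs]
    rfl
  rw [this]; ring

def df (a b : Fin n → ℝ) : ℝ :=
  ∑ i : Fin n, (if (i : ℕ) = 0 then (1:ℝ) else -1) * (a i * b i)

lemma Bf_eq_df (G : Matrix (Fin n) (Fin n) ℤ) (P : Matrix (Fin n) (Fin n) ℝ)
    (hdet : IsUnit P.det)
    (hP : Pᵀ * (G.map (Int.cast : ℤ → ℝ)) * P =
      Matrix.diagonal (fun i : Fin n => if (i : ℕ) = 0 then (1 : ℝ) else -1))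
    (x y : Fin n → ℝ) :
    Bf G x y = df (P⁻¹ *ᵥ x) (P⁻¹ *ᵥ y) := by
  set D := Matrix.diagonal (fun i : Fin n => if (i : ℕ) = 0 then (1 : ℝ) else -1) with hD
  have h1 : P * P⁻¹ = 1 := Matrix.mul_nonsing_inv P hdet
  have h1' : P⁻¹ * P = 1 := Matrix.nonsing_inv_mul P hdet
  have h2 : P⁻¹ᵀ * Pᵀ = 1 := by rw [← Matrix.transpose_mul, h1, Matrix.transpose_one]
  have hGR : G.map (Int.cast : ℤ → ℝ) = P⁻¹ᵀ * D * P⁻¹ := by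
    rw [← hP]
    have : P⁻¹ᵀ * (Pᵀ * G.map (Int.cast : ℤ → ℝ) * P) * P⁻¹
        = (P⁻¹ᵀ * Pᵀ) * G.map (Int.cast : ℤ → ℝ) * (P * P⁻¹) := by noncomm_ring
    rw [this, h2, h1, Matrix.one_mul, Matrix.mul_one]
  rw [Bf, hGR, ← Matrix.mulVec_mulVec, ← Matrix.mulVec_mulVec,
    Matrix.dotProduct_mulVec, Matrix.vecMul_transpose]
  simp only [df, hD, dotProduct, Matrix.mulVec_diagonal]
  exact Finset.sum_congr rfl fun i _ => by ring

lemma df_split (hn : 0 < n) (a b : Fin n → ℝ) :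
    df a b = a ⟨0, hn⟩ * b ⟨0, hn⟩ -
      ∑ i ∈ Finset.univ.erase ⟨0, hn⟩, a i * b i := by
  unfold df
  rw [← Finset.add_sum_erase Finset.univ
    (fun i : Fin n => (if (i : ℕ) = 0 then (1:ℝ) else -1) * (a i * b i))
    (Finset.mem_univ (⟨0, hn⟩ : Fin n))]
  have step : ∑ i ∈ Finset.univ.erase (⟨0, hn⟩ : Fin n),
      (if (i : ℕ) = 0 then (1:ℝ) else -1) * (a i * b i) =
      ∑ i ∈ Finset.univ.erase (⟨0, hn⟩ : Fin n), -(a i * b i) := by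
    refine Finset.sum_congr rfl fun i hi => ?_
    have : (i : ℕ) ≠ 0 := by
      intro h
      exact (Finset.mem_erase.mp hi).1 (Fin.ext h)
    rw [if_neg this]; ring
  rw [step, Finset.sum_neg_distrib]
  norm_num
  ring

lemma df_sign (hn : 0 < n) (a b : Fin n → ℝ) (ha : 0 < df a a) (hb : 0 < df b b) :
    (0 < df a b ↔ 0 < a ⟨0, hn⟩ * b ⟨0, hn⟩) := by
  set z : Fin n := ⟨0, hn⟩
  set A := ∑ i ∈ Finset.univ.erase z, a i * a i with hA
  set B := ∑ i ∈ Finset.univ.erase z, b i * b i with hB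
  set s := ∑ i ∈ Finset.univ.erase z, a i * b i with hs
  have hA' : A = ∑ i ∈ Finset.univ.erase z, a i ^ 2 := by
    rw [hA]; exact Finset.sum_congr rfl fun i _ => (sq (a i)).symm
  have hB' : B = ∑ i ∈ Finset.univ.erase z, b i ^ 2 := by
    rw [hB]; exact Finset.sum_congr rfl fun i _ => (sq (b i)).symm
  have hA0 : 0 ≤ A := by rw [hA']; positivity
  have hB0 : 0 ≤ B := by rw [hB']; positivity
  have hcs : s ^ 2 ≤ A * B := by
    rw [hA', hB']; exact Finset.sum_mul_sq_le_sq_mul_sq _ _ _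
  have ha2 : A < a z ^ 2 := by
    have := df_split hn a a; rw [← hA] at this; nlinarith [this ▸ ha]
  have hb2 : B < b z ^ 2 := by
    have := df_split hn b b; rw [← hB] at this; nlinarith [this ▸ hb]
  have habs : s ^ 2 < (a z * b z) ^ 2 := by nlinarith
  have hdf : df a b = a z * b z - s := by rw [df_split hn a b]
  rw [hdf]
  constructor
  · intro h
    nlinarith
  · intro h
    nlinarith

lemma df_trans (hn : 0 < n) (a b c : Fin n → ℝ) (ha : 0 < df a a) (hb : 0 < df b b)
    (hc : 0 < df c c) (hab : 0 < df a b) (hbc : 0 < df b c) : 0 < df a c := by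
  rw [df_sign hn a b ha hb] at hab
  rw [df_sign hn b c hb hc] at hbc
  rw [df_sign hn a c ha hc]
  have hbz : 0 < b ⟨0, hn⟩ ^ 2 := by
    rcases lt_or_ge 0 (b ⟨0, hn⟩ * b ⟨0, hn⟩) with h | h
    · nlinarith
    · nlinarith [df_split hn b b,
        Finset.sum_nonneg (fun i (_ : i ∈ Finset.univ.erase (⟨0, hn⟩ : Fin n)) =>
          mul_self_nonneg (b i))]
  nlinarith

lemma Bf_trans (G : Matrix (Fin n) (Fin n) ℤ) (P : Matrix (Fin n) (Fin n) ℝ)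
    (hdet : IsUnit P.det)
    (hP : Pᵀ * (G.map (Int.cast : ℤ → ℝ)) * P =
      Matrix.diagonal (fun i : Fin n => if (i : ℕ) = 0 then (1 : ℝ) else -1))
    (hn : 0 < n) (x y z : Fin n → ℝ)
    (hx : 0 < Bf G x x) (hy : 0 < Bf G y y) (hz : 0 < Bf G z z)
    (hxy : 0 < Bf G x y) (hyz : 0 < Bf G y z) : 0 < Bf G x z := by
  rw [Bf_eq_df G P hdet hP] at hx hy hz hxy hyz ⊢
  exact df_trans hn _ _ _ hx hy hz hxy hyz

/-- Reflections preserve the positive cone. -/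
lemma reflect_cone (G : Matrix (Fin n) (Fin n) ℤ) (hs : G.IsSymm)
    (P : Matrix (Fin n) (Fin n) ℝ) (hdet : IsUnit P.det)
    (hP : Pᵀ * (G.map (Int.cast : ℤ → ℝ)) * P =
      Matrix.diagonal (fun i : Fin n => if (i : ℕ) = 0 then (1 : ℝ) else -1))
    (hn : 0 < n) (h₀ w r : Fin n → ℤ)
    (hh : 0 < latticePairing G h₀ h₀) (hww : 0 < latticePairing G w w)
    (hwh : 0 < latticePairing G w h₀) (hr : latticePairing G r r = -2) :
    0 < latticePairing G (reflect G w r) h₀ := by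
  set c : ℝ := ((latticePairing G w r : ℤ) : ℝ) with hc
  set W : ℝ := ((latticePairing G w w : ℤ) : ℝ) with hW
  have hW0 : 0 < W := by rw [hW]; exact_mod_cast hww
  have hBww : Bf G (castVec w) (castVec w) = W := (lp_cast G w w).symm
  have hBwr : Bf G (castVec w) (castVec r) = c := (lp_cast G w r).symm
  have hBrw : Bf G (castVec r) (castVec w) = c := by
    rw [Bf_symm G hs]; exact hBwr
  have hBrr : Bf G (castVec r) (castVec r) = -2 := by
    rw [← lp_cast, hr]; norm_num
  have hBhh : 0 < Bf G (castVec h₀) (castVec h₀) := by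
    rw [← lp_cast]; exact_mod_cast hh
  have hBhw : 0 < Bf G (castVec h₀) (castVec w) := by
    rw [← lp_cast, lp_symm G hs]; exact_mod_cast hwh
  set m : Fin n → ℝ := castVec w + (c/2) • castVec r with hm
  have e0 : Bf G m m = W + c^2/2 := by
    rw [hm]
    simp only [Bf_add_left, Bf_add_right, Bf_smul_left, Bf_smul_right, hBww, hBwr, hBrw, hBrr]
    ring
  have e1 : Bf G m (castVec w) = W + c^2/2 := by
    rw [hm, Bf_add_left, Bf_smul_left, hBww, hBrw]; ring
  have e2 : Bf G m (castVec r) = 0 := by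
    rw [hm, Bf_add_left, Bf_smul_left, hBwr, hBrr]; ring
  have hw'cast : castVec (reflect G w r) = castVec w + c • castVec r := by
    funext i
    simp only [reflect, castVec, Pi.add_apply, Pi.smul_apply, smul_eq_mul, hc]
    push_cast
    ring
  have e3 : Bf G m (castVec (reflect G w r)) = W + c^2/2 := by
    rw [hw'cast, Bf_add_right, Bf_smul_right, e1, e2]; ring
  have e4 : Bf G (castVec (reflect G w r)) (castVec (reflect G w r)) = W := by
    rw [← lp_cast, lp_reflect_norm G hs w r hr]
  have hmm : 0 < Bf G m m := by rw [e0]; positivity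
  have hmw : 0 < Bf G (castVec w) m := by
    rw [Bf_symm G hs, e1]; positivity
  have step1 : 0 < Bf G (castVec h₀) m :=
    Bf_trans G P hdet hP hn _ _ _ hBhh (by rw [hBww]; exact hW0) hmm hBhw hmw
  have hmw' : 0 < Bf G m (castVec (reflect G w r)) := by rw [e3]; positivity
  have step2 : 0 < Bf G (castVec h₀) (castVec (reflect G w r)) :=
    Bf_trans G P hdet hP hn _ _ _ hBhh hmm (by rw [e4]; exact hW0) step1 hmw'
  rw [← lp_cast] at step2
  rw [lp_symm G hs]
  exact_mod_cast step2

set_option maxHeartbeats 1000000 in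
/-- The set of lattice vectors with fixed positive square-norm and bounded positive
pairing with `h₀` is finite. -/
lemma shell_finite (G : Matrix (Fin n) (Fin n) ℤ) (hs : G.IsSymm)
    (P : Matrix (Fin n) (Fin n) ℝ) (hdet : IsUnit P.det)
    (hP : Pᵀ * (G.map (Int.cast : ℤ → ℝ)) * P =
      Matrix.diagonal (fun i : Fin n => if (i : ℕ) = 0 then (1 : ℝ) else -1))
    (hn : 0 < n) (h₀ v : Fin n → ℤ)
    (hh : 0 < latticePairing G h₀ h₀) (hv : 0 < latticePairing G v v)
    (hvh : 0 < latticePairing G v h₀) :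
    {u : Fin n → ℤ | latticePairing G u u = latticePairing G v v ∧
      0 < latticePairing G u h₀ ∧
      latticePairing G u h₀ ≤ latticePairing G v h₀}.Finite := by
  classical
  set z : Fin n := ⟨0, hn⟩ with hz
  set Q : Matrix (Fin n) (Fin n) ℝ := P⁻¹ with hQ
  set h' : Fin n → ℝ := Q *ᵥ castVec h₀ with hh'
  set e : ℝ := df h' h' with he
  have hedf : e = ((latticePairing G h₀ h₀ : ℤ) : ℝ) := by
    rw [he, hh', hQ, ← Bf_eq_df G P hdet hP, ← lp_cast]
  have he0 : 0 < e := by rw [hedf]; exact_mod_cast hh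
  set H2 : ℝ := ∑ i ∈ Finset.univ.erase z, h' i ^ 2 with hH2def
  have hH2 : 0 ≤ H2 := by
    rw [hH2def]; exact Finset.sum_nonneg fun i _ => sq_nonneg _
  have hsplit_h : e = h' z * h' z - ∑ i ∈ Finset.univ.erase z, h' i * h' i := by
    rw [he, df_split hn]
  have hhz2 : h' z ^ 2 = e + H2 := by
    have hsum : ∑ i ∈ Finset.univ.erase z, h' i * h' i = H2 := by
      rw [hH2def]; exact Finset.sum_congr rfl fun i _ => (sq (h' i)).symm
    rw [hsum] at hsplit_h
    rw [sq]; linarith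
  set c : ℝ := ((latticePairing G v v : ℤ) : ℝ) with hcd
  have hc0 : 0 < c := by rw [hcd]; exact_mod_cast hv
  set dmax : ℝ := ((latticePairing G v h₀ : ℤ) : ℝ) with hdm
  have hdm0 : 0 < dmax := by rw [hdm]; exact_mod_cast hvh
  set Hs : ℝ := Real.sqrt H2 with hHsdef
  have hHs0 : 0 ≤ Hs := Real.sqrt_nonneg _
  have hHs2 : Hs ^ 2 = H2 := Real.sq_sqrt hH2
  set T0 : ℝ := 1 + (dmax ^ 2 + 2 * dmax * Hs) / e with hT0def
  have hT01 : 1 ≤ T0 := by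
    rw [hT0def]
    have : 0 ≤ (dmax ^ 2 + 2 * dmax * Hs) / e := div_nonneg (add_nonneg (sq_nonneg dmax) (mul_nonneg (mul_nonneg (by norm_num) hdm0.le) hHs0)) (le_of_lt he0)
    linarith
  have hT00 : 0 ≤ T0 := by linarith
  set M2 : ℝ := c + T0 ^ 2 with hM2def
  have hM20 : 0 ≤ M2 := by rw [hM2def]; exact add_nonneg hc0.le (sq_nonneg T0)
  set Ym : ℝ := Real.sqrt M2 with hYmdef
  have hYm0 : 0 ≤ Ym := Real.sqrt_nonneg _
  set Crow : ℝ := ∑ i : Fin n, ∑ j : Fin n, |P i j| with hCrowdef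
  set N : ℤ := ⌈Crow * Ym⌉ with hNdef
  have hsub : {u : Fin n → ℤ | latticePairing G u u = latticePairing G v v ∧
      0 < latticePairing G u h₀ ∧
      latticePairing G u h₀ ≤ latticePairing G v h₀} ⊆
      Set.Icc (fun _ => -N) (fun _ => N) := by
    rintro u ⟨hu1, hu2, hu3⟩
    set y : Fin n → ℝ := Q *ᵥ castVec u with hy
    set A : ℝ := ∑ i ∈ Finset.univ.erase z, y i ^ 2 with hAdef
    have hA0 : 0 ≤ A := by
      rw [hAdef]; exact Finset.sum_nonneg fun i _ => sq_nonneg _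
    have hyy : df y y = c := by
      rw [hy, hQ, ← Bf_eq_df G P hdet hP, ← lp_cast, hu1, hcd]
    have hyz2 : y z ^ 2 = c + A := by
      have h1 : df y y = y z * y z - ∑ i ∈ Finset.univ.erase z, y i * y i := df_split hn y y
      have h2 : ∑ i ∈ Finset.univ.erase z, y i * y i = A := by
        rw [hAdef]; exact Finset.sum_congr rfl fun i _ => (sq (y i)).symm
      rw [h2, hyy] at h1
      rw [sq]; linarith
    set d : ℝ := ((latticePairing G u h₀ : ℤ) : ℝ) with hdd
    have hd0 : 0 < d := by rw [hdd]; exact_mod_cast hu2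
    have hdmax : d ≤ dmax := by rw [hdd, hdm]; exact_mod_cast hu3
    have hyh : df y h' = d := by
      rw [hy, hh', hQ, ← Bf_eq_df G P hdet hP, ← lp_cast, hdd]
    set s : ℝ := ∑ i ∈ Finset.univ.erase z, y i * h' i with hsdef
    have hsplit_d : d = y z * h' z - s := by rw [← hyh, df_split hn, hsdef]
    have hcs : s ^ 2 ≤ A * H2 := by
      rw [hsdef, hAdef, hH2def]; exact Finset.sum_mul_sq_le_sq_mul_sq _ _ _
    set t : ℝ := Real.sqrt A with htdef
    have ht0 : 0 ≤ t := Real.sqrt_nonneg _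
    have ht2 : t ^ 2 = A := Real.sq_sqrt hA0
    have hsabs : |s| ≤ t * Hs := by
      have h1 : s ^ 2 ≤ (t * Hs) ^ 2 := by rw [mul_pow, ht2, hHs2]; exact hcs
      have h2 : 0 ≤ t * Hs := mul_nonneg ht0 hHs0
      calc |s| = Real.sqrt (s ^ 2) := (Real.sqrt_sq_eq_abs s).symm
        _ ≤ Real.sqrt ((t * Hs) ^ 2) := Real.sqrt_le_sqrt h1
        _ = t * Hs := Real.sqrt_sq h2
    have hkey0 : (c + A) * (e + H2) = (d + s) ^ 2 := by
      have h1 : (y z * h' z) ^ 2 = (c + A) * (e + H2) := by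
        rw [mul_pow, hyz2, hhz2]
      have h2 : y z * h' z = d + s := by linarith [hsplit_d]
      rw [← h1, h2]
    have hkey1 : (d + s) ^ 2 ≤ (dmax + t * Hs) ^ 2 := by
      obtain ⟨hs1, hs2⟩ := abs_le.mp hsabs
      exact sq_le_sq' (by linarith) (by linarith)
    have hkey : e * t ^ 2 ≤ dmax ^ 2 + 2 * dmax * Hs * t := by
      have e1 : (c + A) * (e + H2) = c * e + c * H2 + A * e + A * H2 := by ring
      have e2 : (dmax + t * Hs) ^ 2 = dmax ^ 2 + 2 * dmax * Hs * t + t ^ 2 * Hs ^ 2 := by ring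
      have hce : 0 ≤ c * e := mul_nonneg hc0.le he0.le
      have hcH : 0 ≤ c * H2 := mul_nonneg hc0.le hH2
      have hAH : A * H2 = t ^ 2 * Hs ^ 2 := by rw [ht2, hHs2]
      have hAe : A * e = e * t ^ 2 := by rw [ht2]; ring
      linarith [hkey0, hkey1]
    have htT0 : t ≤ T0 := by
      rcases le_or_gt t 1 with h | h
      · linarith
      · have h5 : e * t ≤ dmax ^ 2 + 2 * dmax * Hs := by
          have hA1 : e * t * t ≤ (dmax ^ 2 + 2 * dmax * Hs) * t := by
            have hd2 : dmax ^ 2 ≤ dmax ^ 2 * t := le_mul_of_one_le_right (sq_nonneg dmax) h.le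
            calc e * t * t = e * t ^ 2 := by ring
              _ ≤ dmax ^ 2 + 2 * dmax * Hs * t := hkey
              _ ≤ dmax ^ 2 * t + 2 * dmax * Hs * t := by linarith
              _ = (dmax ^ 2 + 2 * dmax * Hs) * t := by ring
          exact le_of_mul_le_mul_right hA1 (lt_trans zero_lt_one h)
        have h6 : t ≤ (dmax ^ 2 + 2 * dmax * Hs) / e := by
          rw [le_div_iff₀ he0]; linarith [h5]
        rw [hT0def]; linarith
    have hAT0 : A ≤ T0 ^ 2 := by
      rw [← ht2]; exact pow_le_pow_left₀ ht0 htT0 2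
    have hyi : ∀ i, y i ^ 2 ≤ M2 := by
      intro i
      rcases eq_or_ne i z with rfl | hiz
      · rw [hyz2, hM2def]; linarith
      · have : y i ^ 2 ≤ A := by
          rw [hAdef]
          exact Finset.single_le_sum (fun j _ => sq_nonneg (y j))
            (Finset.mem_erase.mpr ⟨hiz, Finset.mem_univ i⟩)
        rw [hM2def]; linarith
    have hyabs : ∀ i, |y i| ≤ Ym := by
      intro i
      rw [hYmdef, ← Real.sqrt_sq_eq_abs]
      exact Real.sqrt_le_sqrt (hyi i)
    have hPy : castVec u = P *ᵥ y := by
      rw [hy, hQ, Matrix.mulVec_mulVec, Matrix.mul_nonsing_inv P hdet, Matrix.one_mulVec]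
    have hui : ∀ i, |(u i : ℝ)| ≤ Crow * Ym := by
      intro i
      have h1 : (u i : ℝ) = ∑ j : Fin n, P i j * y j := by
        have := congrFun hPy i
        simpa [castVec, Matrix.mulVec, dotProduct] using this
      rw [h1]
      calc |∑ j : Fin n, P i j * y j| ≤ ∑ j : Fin n, |P i j * y j| :=
            Finset.abs_sum_le_sum_abs _ _
        _ ≤ ∑ j : Fin n, |P i j| * Ym := by
            refine Finset.sum_le_sum fun j _ => ?_
            rw [abs_mul]
            exact mul_le_mul_of_nonneg_left (hyabs j) (abs_nonneg _)
        _ = (∑ j : Fin n, |P i j|) * Ym := by rw [Finset.sum_mul]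
        _ ≤ Crow * Ym := by
            refine mul_le_mul_of_nonneg_right ?_ hYm0
            rw [hCrowdef]
            exact Finset.single_le_sum
              (fun k (_ : k ∈ Finset.univ) => Finset.sum_nonneg fun j _ => abs_nonneg (P k j))
              (Finset.mem_univ i)
    have huiZ : ∀ i, -N ≤ u i ∧ u i ≤ N := by
      intro i
      have h1 : |((u i : ℤ) : ℝ)| ≤ (N : ℝ) :=
        le_trans (hui i) (le_trans (Int.le_ceil _) (by rw [hNdef]))
      have h3 : |u i| ≤ N := by exact_mod_cast h1
      exact abs_le.mp h3
    rw [Set.mem_Icc]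
    constructor
    · intro i; exact (huiZ i).1
    · intro i; exact (huiZ i).2
  exact (Set.finite_Icc _ _).subset hsub

end AuxWeyl

theorem exists_weyl_image_in_fundamental_domain {n K : ℕ}
    (G : Matrix (Fin n) (Fin n) ℤ) (hG : IsEvenHyperbolic G)
    (h₀ : Fin n → ℤ) (ρ : Fin K → Fin n → ℤ)
    (hh₀ : 0 < latticePairing G h₀ h₀)
    (hample : ∀ r : Fin n → ℤ, latticePairing G r r = -2 →
      latticePairing G r h₀ = 0 → ∃ i, latticePairing G (ρ i) r ≠ 0)
    (v : Fin n → ℤ) (hv : 0 < latticePairing G v v)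
    (hvcone : 0 < latticePairing G v h₀) :
    ∃ rs : List (Fin n → ℤ), (∀ r ∈ rs, latticePairing G r r = -2) ∧
      ∃ w : Fin n → ℤ, w = rs.foldl (reflect G) v ∧
        latticePairing G w w = latticePairing G v v ∧
        0 < latticePairing G w w ∧ 0 < latticePairing G w h₀ ∧
        (¬ ∃ r : Fin n → ℤ, 0 < latticePairing G r h₀ ∧ latticePairing G r w < 0 ∧
          latticePairing G r r = -2) ∧
        ∀ r : Fin n → ℤ, latticePairing G r r = -2 → latticePairing G r h₀ = 0 →
          LexPos (pairingVector G h₀ ρ r) → 0 ≤ latticePairing G w r := by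
  classical
  obtain ⟨hn1, hsym, -, P, hdet, hP⟩ := hG
  have hn : 0 < n := by omega
  set S : Set (Fin n → ℤ) := {u | latticePairing G u u = latticePairing G v v ∧
      0 < latticePairing G u h₀ ∧ latticePairing G u h₀ ≤ latticePairing G v h₀} with hS
  have hSfin : S.Finite :=
    AuxWeyl.shell_finite G hsym P hdet hP hn h₀ v hh₀ hv hvcone
  set pv : (Fin n → ℤ) → Fin (K + 1) → ℤ := pairingVector G h₀ ρ with hpv
  set Tlt : (Fin (K + 1) → ℤ) → (Fin (K + 1) → ℤ) → Prop :=
    fun a b => ∃ j, a j < b j ∧ ∀ i, i < j → a i = b i with hTlt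
  have tlt_irrefl : ∀ a, ¬ Tlt a a := by
    rintro a ⟨j, hj, -⟩; exact lt_irrefl _ hj
  have tlt_trans : ∀ a b c, Tlt a b → Tlt b c → Tlt a c := by
    rintro a b c ⟨j₁, hj₁, h₁⟩ ⟨j₂, hj₂, h₂⟩
    rcases lt_trichotomy j₁ j₂ with h | h | h
    · exact ⟨j₁, by rw [← h₂ j₁ h]; exact hj₁, fun i hi => by
        rw [h₁ i hi, h₂ i (lt_trans hi h)]⟩
    · subst h
      exact ⟨j₁, lt_trans hj₁ hj₂, fun i hi => by rw [h₁ i hi, h₂ i hi]⟩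
    · exact ⟨j₂, by rw [h₁ j₂ h]; exact hj₂, fun i hi => by
        rw [h₁ i (lt_trans hi h), h₂ i hi]⟩
  have pv_reflect : ∀ w r : Fin n → ℤ, ∀ j,
      pv (reflect G w r) j = pv w j + latticePairing G w r * pv r j := by
    intro w r j
    have hbase : ∀ z : Fin n → ℤ, latticePairing G z (reflect G w r) =
        latticePairing G z w + latticePairing G w r * latticePairing G z r := by
      intro z
      show latticePairing G z (w + latticePairing G w r • r) = _
      rw [AuxWeyl.lp_add_right, AuxWeyl.lp_smul_right]
    refine Fin.cases ?_ ?_ j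
    · show pairingVector G h₀ ρ (reflect G w r) 0 = _
      simp only [pairingVector, Fin.cons_zero, hpv]
      exact hbase h₀
    · intro i
      show pairingVector G h₀ ρ (reflect G w r) i.succ = _
      simp only [pairingVector, Fin.cons_succ, hpv]
      exact hbase (ρ i)
  -- the main descent
  have key : ∀ N : ℕ, ∀ w, w ∈ S →
      ({u | u ∈ S ∧ Tlt (pv u) (pv w)}).ncard = N →
      ∃ rs : List (Fin n → ℤ), (∀ r ∈ rs, latticePairing G r r = -2) ∧
        rs.foldl (reflect G) w ∈ S ∧
        ∀ r : Fin n → ℤ, latticePairing G r r = -2 →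
          latticePairing G (rs.foldl (reflect G) w) r < 0 → ¬ LexPos (pv r) := by
    intro N
    induction N using Nat.strong_induction_on with
    | _ N ih =>
      intro w hwS hcard
      by_cases hbad : ∃ r : Fin n → ℤ, latticePairing G r r = -2 ∧
          latticePairing G w r < 0 ∧ LexPos (pv r)
      · obtain ⟨r, hr2, hwr, hlex⟩ := hbad
        have hww : 0 < latticePairing G w w := by rw [hwS.1]; exact hv
        have hpv0 : 0 ≤ pv r 0 := by
          obtain ⟨j, hj, hji⟩ := hlex
          rcases eq_or_ne j 0 with rfl | hj0
          · exact le_of_lt hj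
          · rw [hji 0 (by
              rcases Fin.pos_iff_ne_zero.mpr hj0 with h
              exact h)]
        have hrh0 : 0 ≤ latticePairing G r h₀ := by
          have : pv r 0 = latticePairing G h₀ r := by
            simp only [hpv, pairingVector, Fin.cons_zero]
          rw [AuxWeyl.lp_symm G hsym r h₀, ← this]
          exact hpv0
        have hS' : reflect G w r ∈ S := by
          refine ⟨?_, ?_, ?_⟩
          · rw [AuxWeyl.lp_reflect_norm G hsym w r hr2]; exact hwS.1
          · exact AuxWeyl.reflect_cone G hsym P hdet hP hn h₀ w r hh₀ hww hwS.2.1 hr2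
          · have hexp : latticePairing G (reflect G w r) h₀ =
                latticePairing G w h₀ + latticePairing G w r * latticePairing G r h₀ :=
              AuxWeyl.lp_reflect_left G w r h₀
            have : latticePairing G w r * latticePairing G r h₀ ≤ 0 :=
              mul_nonpos_of_nonpos_of_nonneg (le_of_lt hwr) hrh0
            calc latticePairing G (reflect G w r) h₀
                ≤ latticePairing G w h₀ := by rw [hexp]; linarith
              _ ≤ latticePairing G v h₀ := hwS.2.2
        have hTlt' : Tlt (pv (reflect G w r)) (pv w) := by
          obtain ⟨j, hj, hji⟩ := hlex
          refine ⟨j, ?_, ?_⟩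
          · rw [pv_reflect w r j]
            nlinarith [mul_neg_of_neg_of_pos hwr hj]
          · intro i hi
            rw [pv_reflect w r i, hji i hi]
            ring
        have hssub : {u | u ∈ S ∧ Tlt (pv u) (pv (reflect G w r))} ⊂
            {u | u ∈ S ∧ Tlt (pv u) (pv w)} := by
          constructor
          · rintro u ⟨hu1, hu2⟩
            exact ⟨hu1, tlt_trans _ _ _ hu2 hTlt'⟩
          · intro hcon
            have hmem : reflect G w r ∈ {u | u ∈ S ∧ Tlt (pv u) (pv w)} := ⟨hS', hTlt'⟩
            have := hcon hmem
            exact tlt_irrefl _ this.2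
        have hfin : ({u | u ∈ S ∧ Tlt (pv u) (pv w)}).Finite :=
          hSfin.subset fun u hu => hu.1
        have hlt : ({u | u ∈ S ∧ Tlt (pv u) (pv (reflect G w r))}).ncard < N := by
          rw [← hcard]
          exact Set.ncard_lt_ncard hssub hfin
        obtain ⟨rs', hrs'1, hrs'2, hrs'3⟩ := ih _ hlt (reflect G w r) hS' rfl
        refine ⟨r :: rs', ?_, ?_, ?_⟩
        · intro r' hr'
          rcases List.mem_cons.mp hr' with rfl | h
          · exact hr2
          · exact hrs'1 r' h
        · simpa [List.foldl_cons] using hrs'2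
        · simpa [List.foldl_cons] using hrs'3
      · push_neg at hbad
        exact ⟨[], by simp, by simpa using hwS, by simpa using hbad⟩
  obtain ⟨rs, hrs1, hrs2, hrs3⟩ :=
    key _ v ⟨rfl, hvcone, le_refl _⟩ rfl
  refine ⟨rs, hrs1, rs.foldl (reflect G) v, rfl, hrs2.1, by rw [hrs2.1]; exact hv,
    hrs2.2.1, ?_, ?_⟩
  · rintro ⟨r, hr1, hr2, hr3⟩
    refine hrs3 r hr3 ?_ ?_
    · rw [AuxWeyl.lp_symm G hsym]; exact hr2
    · refine ⟨0, ?_, fun i hi => absurd hi (Fin.not_lt_zero i)⟩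
      show 0 < pairingVector G h₀ ρ r 0
      simp only [pairingVector, Fin.cons_zero]
      rw [AuxWeyl.lp_symm G hsym]; exact hr1
  · intro r h1 h2 hlex
    by_contra hneg
    push_neg at hneg
    exact hrs3 r h1 hneg hlex
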